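/- Main theorem (sufficiency, case (ii)): Let T be a 2-isometry, u,v nonzero with ‖v‖=1, K = u⊗v, T̃ = T + K, S = {x ∈ ker K : Tx ∈ ker K}, and suppose S ≠ ker K. Assume: Δ₂(T̃)v = 0; Δ₂(T̃)(S) ⊆ S; and ‖u‖² = −2(γ + Re⟨u, Tv⟩), where γ = Re( ⟨T* P_{ker K} T* u, x⟩ / ⟨T*v, x⟩ ) for some (equivalently every) nonzero x ∈ S^⊥ ∩ ker K. Then T̃ is a 2-isometry. -/

import Mathlib

open ContinuousLinearMap

variable {H : Type*} [NormedAddCommGroup H] [InnerProductSpace ℂ H] [CompleteSpace H]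

/-- The rank-one operator `u ⊗ v`, defined by `(u ⊗ v) h = ⟨h, v⟩ u`. -/
noncomputable def rankOne (u v : H) : H →L[ℂ] H := (innerSL ℂ v).smulRight u

/-- `Δ₂(T) = I - 2 T*T + T*²T²`. -/
noncomputable def Delta2 (T : H →L[ℂ] H) : H →L[ℂ] H :=
  1 - 2 • (ContinuousLinearMap.adjoint T ∘L T)
    + ContinuousLinearMap.adjoint (T ∘L T) ∘L (T ∘L T)

local notation "⟪" x ", " y "⟫" => @inner ℂ _ _ x y

lemma Delta2_apply (T : H →L[ℂ] H) (x : H) :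
    Delta2 T x = x - 2 • (adjoint T (T x)) + adjoint T (adjoint T (T (T x))) := by
  simp [Delta2, adjoint_comp]

lemma Delta2_inner (T : H →L[ℂ] H) (x y : H) :
    ⟪Delta2 T x, y⟫ = ⟪x, y⟫ - 2 * ⟪T x, T y⟫ + ⟪T (T x), T (T y)⟫ := by
  rw [Delta2_apply]
  simp [inner_sub_left, inner_add_left, inner_smul_left, adjoint_inner_left, two_smul]
  ring

lemma Delta2_inner_right (T : H →L[ℂ] H) (x y : H) :
    ⟪x, Delta2 T y⟫ = ⟪x, y⟫ - 2 * ⟪T x, T y⟫ + ⟪T (T x), T (T y)⟫ := by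
  rw [Delta2_apply]
  simp [inner_sub_right, inner_add_right, inner_smul_right, adjoint_inner_right, two_smul]
  ring

lemma Delta2_selfadj (T : H →L[ℂ] H) (x y : H) :
    ⟪Delta2 T x, y⟫ = ⟪x, Delta2 T y⟫ := by
  rw [Delta2_inner, Delta2_inner_right]

theorem stmt_11 (T : H →L[ℂ] H) (hT : Delta2 T = 0) (u v : H) (hu : u ≠ 0) (hv : v ≠ 0)
    (hv1 : ‖v‖ = 1) (K : H →L[ℂ] H) (hK : K = rankOne u v)
    (S : Submodule ℂ H) (hS : ∀ x : H, x ∈ S ↔ K x = 0 ∧ K (T x) = 0)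
    (hSne : S ≠ LinearMap.ker (K : H →ₗ[ℂ] H))
    (hvker : Delta2 (T + K) v = 0)
    (hinv : ∀ x ∈ S, Delta2 (T + K) x ∈ S)
    (γ : ℝ)
    (hγ : ∀ x ∈ Sᗮ ⊓ LinearMap.ker (K : H →ₗ[ℂ] H), x ≠ 0 →
      ((inner ℂ x (ContinuousLinearMap.adjoint T
          ((Submodule.orthogonalProjectionOnto (ℂ ∙ v)ᗮ (ContinuousLinearMap.adjoint T u) : H))) : ℂ) /
        (inner ℂ x (ContinuousLinearMap.adjoint T v) : ℂ)).re = γ)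
    (hnorm : ‖u‖ ^ 2 = -2 * (γ + (inner ℂ (T v) u : ℂ).re)) :
    Delta2 (T + K) = 0 := by
  set D := Delta2 (T + K) with hD
  have hvv : ⟪v, v⟫ = 1 := by
    rw [inner_self_eq_norm_sq_to_K, hv1]; norm_num
  have hKx : ∀ x : H, K x = ⟪v, x⟫ • u := fun x => by rw [hK]; rfl
  have hker : ∀ x : H, K x = 0 ↔ ⟪v, x⟫ = 0 := by
    intro x
    rw [hKx, smul_eq_zero]
    simp [hu]
  have hS' : ∀ x : H, x ∈ S ↔ ⟪v, x⟫ = 0 ∧ ⟪v, T x⟫ = 0 := by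
    intro x; rw [hS, hker, hker]
  have hKadj : ∀ x : H, adjoint K x = ⟪u, x⟫ • v := by
    intro x
    apply ext_inner_right ℂ
    intro y
    rw [adjoint_inner_left, hKx, inner_smul_right, inner_smul_left]
    rw [inner_conj_symm]
    ring
  have haK : ∀ y : H, adjoint (T + K) y = adjoint T y + ⟪u, y⟫ • v := by
    intro y
    rw [map_add adjoint T K]
    simp [hKadj]
  -- D applied to elements of S
  have hDS : ∀ x ∈ S, D x = 0 := by
    intro x hx
    obtain ⟨hx1, hx2⟩ := (hS' x).1 hx
    have hTKx : (T + K) x = T x := by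
      rw [add_apply, hKx, hx1, zero_smul, add_zero]
    have hTKTx : (T + K) (T x) = T (T x) := by
      rw [add_apply, hKx, hx2, zero_smul, add_zero]
    have h0' : x - 2 • (adjoint T (T x)) + adjoint T (adjoint T (T (T x))) = 0 := by
      rw [← Delta2_apply, hT]; rfl
    have hDx : D x = ⟪u, T (T x)⟫ • (adjoint T v)
        + ((⟪u, adjoint T (T (T x))⟫ + ⟪u, T (T x)⟫ * ⟪u, v⟫ - 2 * ⟪u, T x⟫) • v) := by
      rw [hD, Delta2_apply, hTKx, hTKTx]
      simp only [haK]
      simp only [map_add, map_smul, inner_add_right, inner_smul_right]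
      rw [← sub_eq_zero, ← h0']
      module
    have hDxS := hinv x hx
    obtain ⟨hd1, hd2⟩ := (hS' _).1 hDxS
    have hd2' : ⟪adjoint T v, D x⟫ = 0 := by rw [adjoint_inner_left]; exact hd2
    have : ⟪D x, D x⟫ = 0 := by
      nth_rewrite 1 [hDx]
      rw [inner_add_left, inner_smul_left, inner_smul_left, hd1, hd2']
      ring
    exact inner_self_eq_zero.mp this
  -- the vector w₀
  set w : H := adjoint T v - ⟪v, adjoint T v⟫ • v with hw
  have hvw : ⟪v, w⟫ = 0 := by
    rw [hw, inner_sub_right, inner_smul_right, hvv, mul_one, sub_self]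
  have hwv : ⟪w, v⟫ = 0 := by
    rw [← inner_conj_symm, hvw, map_zero]
  have hTvw : ∀ x : H, ⟪v, x⟫ = 0 → ⟪adjoint T v, x⟫ = ⟪w, x⟫ := by
    intro x hx
    rw [hw, inner_sub_left, inner_smul_left, hx, mul_zero, sub_zero]
  have hwS : ∀ s ∈ S, ⟪s, w⟫ = 0 := by
    intro s hs
    obtain ⟨hs1, hs2⟩ := (hS' s).1 hs
    rw [← inner_conj_symm, ← hTvw s hs1, adjoint_inner_left, hs2, map_zero]
  have hwne : w ≠ 0 := by
    intro h0
    apply hSne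
    ext x
    rw [hS' x, LinearMap.mem_ker, ContinuousLinearMap.coe_coe, hker]
    constructor
    · exact fun h => h.1
    · intro hx
      refine ⟨hx, ?_⟩
      have hTv : adjoint T v = ⟪v, adjoint T v⟫ • v := by
        rw [← sub_eq_zero]; exact h0
      rw [← adjoint_inner_left, hTv, inner_smul_left, hx, mul_zero]
  have hcw : ⟪adjoint T v, w⟫ = (‖w‖ : ℂ) ^ 2 := by
    rw [hTvw w hvw, inner_self_eq_norm_sq_to_K]
    exact rfl
  have hwTv : ⟪w, adjoint T v⟫ = (‖w‖ : ℂ) ^ 2 := by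
    rw [← inner_conj_symm, hcw, map_pow, Complex.conj_ofReal]
  have hwn0 : (‖w‖ : ℂ) ^ 2 ≠ 0 := by
    simpa using hwne
  -- decomposition criterion
  have hdecomp : ∀ x : H, ⟪v, x⟫ = 0 → ⟪w, x⟫ = 0 → x ∈ S := by
    intro x h1 h2
    rw [hS' x]
    refine ⟨h1, ?_⟩
    rw [← adjoint_inner_left, hTvw x h1, h2]
  -- w ∈ Sᗮ ⊓ ker K
  have hwmem : w ∈ Sᗮ ⊓ LinearMap.ker (K : H →ₗ[ℂ] H) := by
    refine Submodule.mem_inf.mpr ⟨?_, ?_⟩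
    · rw [Submodule.mem_orthogonal]
      exact hwS
    · rw [LinearMap.mem_ker, ContinuousLinearMap.coe_coe, hker]
      exact hvw
  -- the γ computation
  have hproj : ((Submodule.orthogonalProjectionOnto (ℂ ∙ v)ᗮ (adjoint T u) : H))
      = adjoint T u - ⟪v, adjoint T u⟫ • v := by
    rw [Submodule.coe_orthogonalProjectionOnto_apply, Submodule.starProjection_orthogonal_val,
      Submodule.starProjection_singleton, hv1]
    norm_num
  have hre : (⟪T (T w), u⟫).re = (γ + (⟪T v, u⟫).re) * ‖w‖ ^ 2 := by
    have h1 := hγ w hwmem hwne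
    have hTwv : ⟪T w, v⟫ = (‖w‖ : ℂ) ^ 2 := by
      rw [← inner_conj_symm, ← adjoint_inner_left, hcw, map_pow, Complex.conj_ofReal]
    have h2 : ⟪w, adjoint T ((Submodule.orthogonalProjectionOnto (ℂ ∙ v)ᗮ (adjoint T u) : H))⟫
        = ⟪T (T w), u⟫ - ⟪T v, u⟫ * (‖w‖ : ℂ) ^ 2 := by
      rw [hproj, adjoint_inner_right, inner_sub_right, inner_smul_right]
      congr 1
      · simp only [adjoint_inner_right]
      · rw [hTwv]
        simp only [adjoint_inner_right]
    rw [h2, hwTv] at h1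
    have h3 : ((⟪T (T w), u⟫ - ⟪T v, u⟫ * (‖w‖ : ℂ) ^ 2) / ((‖w‖ : ℂ) ^ 2)).re
        = ((⟪T (T w), u⟫).re - (⟪T v, u⟫).re * ‖w‖ ^ 2) / (‖w‖ ^ 2) := by
      rw [← Complex.ofReal_pow, Complex.div_ofReal_re]
      congr 1
      simp [Complex.sub_re, Complex.mul_re, ← Complex.ofReal_pow]
    rw [h3] at h1
    have hw2 : (0:ℝ) < ‖w‖ ^ 2 := by
      have := norm_pos_iff.mpr hwne
      positivity
    rw [div_eq_iff (ne_of_gt hw2)] at h1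
    linarith
  -- key inner product vanishing
  have hwDw : ⟪w, D w⟫ = 0 := by
    have hTKw : (T + K) w = T w := by
      rw [add_apply, hKx, hvw, zero_smul, add_zero]
    have hvTw : ⟪v, T w⟫ = (‖w‖ : ℂ) ^ 2 := by
      rw [← adjoint_inner_left, hcw]
    have hTKTw : (T + K) (T w) = T (T w) + ((‖w‖ : ℂ) ^ 2) • u := by
      rw [add_apply, hKx, hvTw]
    have h0 : ⟪w, w⟫ - 2 * ⟪T w, T w⟫ + ⟪T (T w), T (T w)⟫ = 0 := by
      rw [← Delta2_inner, hT]
      simp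
    have huu : ⟪u, u⟫ = (‖u‖ : ℂ) ^ 2 := inner_self_eq_norm_sq_to_K u
    have hcconj : (starRingEnd ℂ) ((‖w‖ : ℂ) ^ 2) = (‖w‖ : ℂ) ^ 2 := by
      rw [map_pow, Complex.conj_ofReal]
    have hz : ⟪T (T w), u⟫ + ⟪u, T (T w)⟫ = 2 * ((⟪T (T w), u⟫).re : ℂ) := by
      rw [← inner_conj_symm u (T (T w)), Complex.add_conj]
      push_cast
      ring
    have hre' : ((⟪T (T w), u⟫).re : ℂ) = ((γ : ℂ) + ((⟪T v, u⟫).re : ℂ)) * (‖w‖ : ℂ) ^ 2 := by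
      rw [hre]; push_cast; ring
    have hn : (‖u‖ : ℂ) ^ 2 = -2 * ((γ : ℂ) + ((⟪T v, u⟫).re : ℂ)) := by
      exact_mod_cast hnorm
    have e1 : ⟪T (T w) + ((‖w‖ : ℂ) ^ 2) • u, T (T w) + ((‖w‖ : ℂ) ^ 2) • u⟫
        = ⟪T (T w), T (T w)⟫ + (‖w‖ : ℂ) ^ 2 * ⟪u, T (T w)⟫
          + (‖w‖ : ℂ) ^ 2 * ⟪T (T w), u⟫ + ((‖w‖ : ℂ) ^ 2) ^ 2 * (‖u‖ : ℂ) ^ 2 := by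
      rw [inner_add_add_self]
      simp only [inner_smul_left, inner_smul_right, hcconj, huu]
      ring
    rw [hD, Delta2_inner_right, hTKw, hTKTw, e1]
    linear_combination h0 + (‖w‖ : ℂ) ^ 2 * hz + 2 * (‖w‖ : ℂ) ^ 2 * hre'
      + ((‖w‖ : ℂ) ^ 2) ^ 2 * hn
  -- D w = 0
  have hDw : D w = 0 := by
    have hvDw : ⟪v, D w⟫ = 0 := by
      rw [hD, ← Delta2_selfadj, ← hD, hvker, inner_zero_left]
    have hDwS : D w ∈ S := hdecomp _ hvDw hwDw
    have : ⟪D w, D w⟫ = 0 := by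
      rw [hD, Delta2_selfadj, ← hD, hDS _ hDwS, inner_zero_right]
    exact inner_self_eq_zero.mp this
  -- conclude
  ext x
  have hx : x = ⟪v, x⟫ • v + (⟪w, x⟫ / ((‖w‖ : ℂ) ^ 2)) • w
      + (x - ⟪v, x⟫ • v - (⟪w, x⟫ / ((‖w‖ : ℂ) ^ 2)) • w) := by abel
  have hsmem : (x - ⟪v, x⟫ • v - (⟪w, x⟫ / ((‖w‖ : ℂ) ^ 2)) • w) ∈ S := by
    apply hdecomp
    · rw [inner_sub_right, inner_sub_right, inner_smul_right, inner_smul_right, hvv, hvw]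
      ring
    · rw [inner_sub_right, inner_sub_right, inner_smul_right, inner_smul_right, hwv]
      have hww : ⟪w, w⟫ = (‖w‖ : ℂ) ^ 2 := by
        rw [inner_self_eq_norm_sq_to_K]; exact rfl
      rw [hww, div_mul_cancel₀ _ hwn0]
      ring
  rw [zero_apply]
  calc D x = D (⟪v, x⟫ • v + (⟪w, x⟫ / ((‖w‖ : ℂ) ^ 2)) • w
      + (x - ⟪v, x⟫ • v - (⟪w, x⟫ / ((‖w‖ : ℂ) ^ 2)) • w)) := by rw [← hx]
    _ = ⟪v, x⟫ • D v + (⟪w, x⟫ / ((‖w‖ : ℂ) ^ 2)) • D w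
      + D (x - ⟪v, x⟫ • v - (⟪w, x⟫ / ((‖w‖ : ℂ) ^ 2)) • w) := by
        rw [map_add, map_add, map_smul, map_smul]
    _ = 0 := by
        rw [hvker, hDw, hDS _ hsmem]
        simp
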